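/- Let n ≥ 2, S ⊆ ℤ^n, and g : ℤ^k → ℤ an operation. Assume there exists a majority operation h : ℤ³ → ℤ such that every g-closed subset R ⊆ ℤ² is h-closed. Then the following are equivalent: (i) S is closed under some majority operation and under g; (ii) S is closed under some majority operation, and for each 1 ≤ i < j ≤ n, π_{i,j}(S) is g-closed; (iii) S = ⋈_{1≤i<j≤n} π_{i,j}(S), and for each 1 ≤ i < j ≤ n, π_{i,j}(S) is g-closed; (iv) S = ⋈_{1≤i<j≤n} cl_g(π_{i,j}(S)). -/
import Mathlib


/-- Componentwise closedness of a set of `ι`-indexed integer vectors under a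
`k`-ary operation `f : ℤ^k → ℤ`. -/
def CptClosed {k : ℕ} {ι : Type*} (f : (Fin k → ℤ) → ℤ) (S : Set (ι → ℤ)) : Prop :=
  ∀ x : Fin k → ι → ℤ, (∀ l, x l ∈ S) → (fun i => f (fun l => x l i)) ∈ S

/-- `f : ℤ³ → ℤ` is a majority operation. -/
def IsMajorityOp (f : (Fin 3 → ℤ) → ℤ) : Prop :=
  ∀ a b : ℤ, f ![a, a, b] = a ∧ f ![a, b, a] = a ∧ f ![b, a, a] = a

/-- `S` is closed under some majority operation. -/
def MajClosed {ι : Type*} (S : Set (ι → ℤ)) : Prop :=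
  ∃ f : (Fin 3 → ℤ) → ℤ, IsMajorityOp f ∧ CptClosed f S

/-- The projection `π_{i,j}(x) = (x_i, x_j)`. -/
def proj2 {n : ℕ} (i j : Fin n) (x : Fin n → ℤ) : Fin 2 → ℤ := ![x i, x j]

/-- The projection `π_{i,j}(S)`. -/
def projSet {n : ℕ} (i j : Fin n) (S : Set (Fin n → ℤ)) : Set (Fin 2 → ℤ) :=
  proj2 i j '' S

/-- The join `⋈_{1 ≤ i < j ≤ n} F i j`. -/
def joinPairs {n : ℕ} (F : Fin n → Fin n → Set (Fin 2 → ℤ)) : Set (Fin n → ℤ) :=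
  {x | ∀ i j : Fin n, i < j → proj2 i j x ∈ F i j}

/-- The `f`-closure of `S`: the intersection of all `f`-closed supersets of `S`. -/
def clOp {k m : ℕ} (f : (Fin k → ℤ) → ℤ) (S : Set (Fin m → ℤ)) : Set (Fin m → ℤ) :=
  ⋂₀ {T | S ⊆ T ∧ CptClosed f T}

/-- The directed discrete midpoint operation `μ`. -/
def muOp : (Fin 2 → ℤ) → ℤ := fun t =>
  if t 1 ≤ t 0 then ⌈((t 0 + t 1 : ℤ) : ℚ) / 2⌉ else ⌊((t 0 + t 1 : ℤ) : ℚ) / 2⌋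

/-- The operation `g(x,y) = ⌈(x+y)/2⌉`. -/
def ceilAvgOp : (Fin 2 → ℤ) → ℤ := fun t => ⌈((t 0 + t 1 : ℤ) : ℚ) / 2⌉

/-- The operation `h(x,y) = ⌊(x+y)/2⌋`. -/
def floorAvgOp : (Fin 2 → ℤ) → ℤ := fun t => ⌊((t 0 + t 1 : ℤ) : ℚ) / 2⌋

/-- The median operation on three integers. -/
def medianOp : (Fin 3 → ℤ) → ℤ := fun t =>
  max (max (min (t 0) (t 1)) (min (t 1) (t 2))) (min (t 0) (t 2))

/-- The canonical embedding `ℤ^m → ℝ^m`. -/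
def toR {m : ℕ} (z : Fin m → ℤ) : Fin m → ℝ := fun l => (z l : ℝ)

/-- The integer neighborhood `N(x)` of a real vector `x`. -/
def intNbhd {m : ℕ} (x : Fin m → ℝ) : Set (Fin m → ℤ) :=
  {z | ∀ j, |(z j : ℝ) - x j| < 1}

/-- `S` is midpoint-neighbor-closed: for all `x, y ∈ S`, `N((x+y)/2) ⊆ S`. -/
def MidpointNeighborClosed {m : ℕ} (S : Set (Fin m → ℤ)) : Prop :=
  ∀ x ∈ S, ∀ y ∈ S, ∀ z : Fin m → ℤ,
    (∀ j, |(z j : ℝ) - ((x j : ℝ) + (y j : ℝ)) / 2| < 1) → z ∈ S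

/-- `S ⊆ ℤ^m` is integrally convex. -/
def IntegrallyConvex {m : ℕ} (S : Set (Fin m → ℤ)) : Prop :=
  ∀ x : Fin m → ℝ, x ∈ convexHull ℝ (toR '' S) →
    x ∈ convexHull ℝ (toR '' (S ∩ intNbhd x))

/-- The closed convex closure of `T ⊆ ℤ^m` inside `ℝ^m`: the intersection of all
topologically closed convex sets containing `T`. -/
def closedConvexClosure {m : ℕ} (T : Set (Fin m → ℤ)) : Set (Fin m → ℝ) :=
  ⋂₀ {C : Set (Fin m → ℝ) | Convex ℝ C ∧ IsClosed C ∧ toR '' T ⊆ C}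

/-- `S = cl_conv̄(S) ∩ ℤ^m`. -/
def ClosedConvexIntegral {m : ℕ} (S : Set (Fin m → ℤ)) : Prop :=
  S = {z : Fin m → ℤ | toR z ∈ closedConvexClosure S}

/-- All entries of `A` lie in `{0, -1, +1}`. -/
def UnitMatrix {mR n : ℕ} (A : Matrix (Fin mR) (Fin n) ℤ) : Prop :=
  ∀ i j, A i j = 0 ∨ A i j = -1 ∨ A i j = 1

/-- Each row of `A` has at most `c` nonzero entries. -/
def RowSupportLE {mR n : ℕ} (A : Matrix (Fin mR) (Fin n) ℤ) (c : ℕ) : Prop :=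
  ∀ i, {j | A i j ≠ 0}.ncard ≤ c

/-- `S` is representable by a UTVPI system. -/
def RepUTVPI {n : ℕ} (S : Set (Fin n → ℤ)) : Prop :=
  ∃ (mR : ℕ) (A : Matrix (Fin mR) (Fin n) ℤ) (b : Fin mR → ℝ),
    UnitMatrix A ∧ RowSupportLE A 2 ∧
    S = {x | ∀ i, b i ≤ ((∑ j, A i j * x j : ℤ) : ℝ)}

/-- `S` is representable by an SVPI system. -/
def RepSVPI {n : ℕ} (S : Set (Fin n → ℤ)) : Prop :=
  ∃ (mR : ℕ) (A : Matrix (Fin mR) (Fin n) ℤ) (b : Fin mR → ℝ),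
    UnitMatrix A ∧ RowSupportLE A 1 ∧
    S = {x | ∀ i, b i ≤ ((∑ j, A i j * x j : ℤ) : ℝ)}

/-- `S` is representable by a DC system. -/
def RepDC {n : ℕ} (S : Set (Fin n → ℤ)) : Prop :=
  ∃ (mR : ℕ) (A : Matrix (Fin mR) (Fin n) ℤ) (b : Fin mR → ℝ),
    UnitMatrix A ∧
    (∀ i, {j | A i j = 1}.ncard ≤ 1) ∧ (∀ i, {j | A i j = -1}.ncard ≤ 1) ∧
    S = {x | ∀ i, b i ≤ ((∑ j, A i j * x j : ℤ) : ℝ)}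

/-- `S` is representable by a TVPI system with possibly infinitely many inequalities. -/
def RepTVPIInf {n : ℕ} (S : Set (Fin n → ℤ)) : Prop :=
  ∃ (I : Type) (a1 a2 b : I → ℝ) (p q : I → Fin n),
    S = {x | ∀ i : I, b i ≤ a1 i * (x (p i) : ℝ) + a2 i * (x (q i) : ℝ)}

/-- `S` is 2-decomposable: `S = ⋈_{i<j} π_{i,j}(S)`. -/
def TwoDecomposable {ι : Type*} [LinearOrder ι] (S : Set (ι → ℤ)) : Prop :=
  S = {x | ∀ i j : ι, i < j → ∃ s ∈ S, s i = x i ∧ s j = x j}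

section Aux

lemma vec3_eta (v : Fin 3 → ℤ) : v = ![v 0, v 1, v 2] := by
  funext i; fin_cases i <;> rfl

lemma maj_two_eq {f : (Fin 3 → ℤ) → ℤ} (hf : IsMajorityOp f) (v : Fin 3 → ℤ) (a : ℤ)
    (h : (v 0 = a ∧ v 1 = a) ∨ (v 0 = a ∧ v 2 = a) ∨ (v 1 = a ∧ v 2 = a)) : f v = a := by
  rw [vec3_eta v]
  rcases h with ⟨h0, h1⟩ | ⟨h0, h2⟩ | ⟨h1, h2⟩
  · rw [h0, h1]; exact (hf a (v 2)).1
  · rw [h0, h2]; exact (hf a (v 1)).2.1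
  · rw [h1, h2]; exact (hf a (v 0)).2.2

lemma proj2_zero {n : ℕ} (i j : Fin n) (x : Fin n → ℤ) : proj2 i j x 0 = x i := rfl

lemma proj2_one {n : ℕ} (i j : Fin n) (x : Fin n → ℤ) : proj2 i j x 1 = x j := rfl

lemma cpt_proj {k n : ℕ} {g : (Fin k → ℤ) → ℤ} {S : Set (Fin n → ℤ)}
    (hS : CptClosed g S) (i j : Fin n) : CptClosed g (projSet i j S) := by
  intro x hx
  choose s hsS hsp using hx
  refine ⟨fun m => g fun l => s l m, hS s hsS, ?_⟩
  funext m
  fin_cases m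
  · show proj2 i j _ 0 = g fun l => x l 0
    rw [proj2_zero]
    congr 1; funext l; rw [← hsp l, proj2_zero]
  · show proj2 i j _ 1 = g fun l => x l 1
    rw [proj2_one]
    congr 1; funext l; rw [← hsp l, proj2_one]

lemma cpt_join {k n : ℕ} {f : (Fin k → ℤ) → ℤ} {F : Fin n → Fin n → Set (Fin 2 → ℤ)}
    (hF : ∀ i j, i < j → CptClosed f (F i j)) : CptClosed f (joinPairs F) := by
  intro x hx i j hij
  have h := hF i j hij (fun l => proj2 i j (x l)) (fun l => hx l i j hij)
  have he : proj2 i j (fun m => f fun l => x l m)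
      = fun m => f fun l => proj2 i j (x l) m := by
    funext m; fin_cases m <;> rfl
  rwa [he]

lemma subset_clOp {k m : ℕ} (g : (Fin k → ℤ) → ℤ) (T : Set (Fin m → ℤ)) :
    T ⊆ clOp g T := fun z hz T' hT' => hT'.1 hz

lemma clOp_closed {k m : ℕ} (g : (Fin k → ℤ) → ℤ) (T : Set (Fin m → ℤ)) :
    CptClosed g (clOp g T) := by
  intro x hx T' hT'
  exact hT'.2 x fun l => hx l T' hT'

lemma clOp_eq_of_closed {k m : ℕ} {g : (Fin k → ℤ) → ℤ} {T : Set (Fin m → ℤ)}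
    (h : CptClosed g T) : clOp g T = T :=
  subset_antisymm (fun z hz => hz T ⟨subset_rfl, h⟩) (subset_clOp g T)

lemma joinPairs_congr {n : ℕ} {F F' : Fin n → Fin n → Set (Fin 2 → ℤ)}
    (h : ∀ i j : Fin n, i < j → F i j = F' i j) : joinPairs F = joinPairs F' := by
  ext x
  constructor <;> intro hx i j hij
  · rw [← h i j hij]; exact hx i j hij
  · rw [h i j hij]; exact hx i j hij

/-- Baker–Pixley 2-decomposability. -/
lemma bp {n : ℕ} (hn : 2 ≤ n) {f : (Fin 3 → ℤ) → ℤ} (hf : IsMajorityOp f)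
    {S : Set (Fin n → ℤ)} (hS : CptClosed f S) :
    S = joinPairs (fun i j => projSet i j S) := by
  apply subset_antisymm
  · intro x hx i j hij; exact ⟨x, hx, rfl⟩
  · intro x hx
    have pair' : ∀ a b : Fin n, a ≠ b → ∃ s ∈ S, s a = x a ∧ s b = x b := by
      intro a b hab
      rcases lt_or_gt_of_ne hab with h | h
      · obtain ⟨s, hs, he⟩ := hx a b h
        exact ⟨s, hs, by rw [← proj2_zero a b x, ← he, proj2_zero],
          by rw [← proj2_one a b x, ← he, proj2_one]⟩
      · obtain ⟨s, hs, he⟩ := hx b a h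
        exact ⟨s, hs, by rw [← proj2_one b a x, ← he, proj2_one],
          by rw [← proj2_zero b a x, ← he, proj2_zero]⟩
    have ntv : Nontrivial (Fin n) := Fin.nontrivial_iff_two_le.mpr hn
    have pair : ∀ a b : Fin n, ∃ s ∈ S, s a = x a ∧ s b = x b := by
      intro a b
      by_cases hab : a = b
      · subst hab
        obtain ⟨c, hc⟩ := exists_ne a
        obtain ⟨s, hs, h1, _⟩ := pair' a c (Ne.symm hc)
        exact ⟨s, hs, h1, h1⟩
      · exact pair' a b hab
    have key : ∀ T : Finset (Fin n), ∃ s ∈ S, ∀ i ∈ T, s i = x i := by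
      intro T
      induction T using Finset.strongInduction with
      | _ T IH =>
        obtain h0 | h1 | h2 | h3 : T.card = 0 ∨ T.card = 1 ∨ T.card = 2 ∨ 3 ≤ T.card := by
          omega
        · rw [Finset.card_eq_zero] at h0; subst h0
          have a : Fin n := ⟨0, by omega⟩
          obtain ⟨s, hs, _⟩ := pair a a
          exact ⟨s, hs, by simp⟩
        · obtain ⟨a, rfl⟩ := Finset.card_eq_one.mp h1
          obtain ⟨s, hs, h1', _⟩ := pair a a
          refine ⟨s, hs, ?_⟩
          intro i hi; rw [Finset.mem_singleton] at hi; subst hi; exact h1'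
        · obtain ⟨a, b, hab, rfl⟩ := Finset.card_eq_two.mp h2
          obtain ⟨s, hs, h1', h2'⟩ := pair a b
          refine ⟨s, hs, ?_⟩
          intro i hi
          rcases Finset.mem_insert.mp hi with rfl | hi
          · exact h1'
          · rw [Finset.mem_singleton] at hi; subst hi; exact h2'
        · obtain ⟨a, ha⟩ := (Finset.card_pos (s := T)).mp (by omega)
          obtain ⟨b, hb⟩ := (Finset.card_pos (s := T.erase a)).mp
            (by rw [Finset.card_erase_of_mem ha]; omega)
          obtain ⟨c, hc⟩ := (Finset.card_pos (s := (T.erase a).erase b)).mp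
            (by rw [Finset.card_erase_of_mem hb, Finset.card_erase_of_mem ha]; omega)
          have hba : b ≠ a := Finset.ne_of_mem_erase hb
          have hcb : c ≠ b := Finset.ne_of_mem_erase hc
          have hca : c ≠ a := Finset.ne_of_mem_erase (Finset.mem_of_mem_erase hc)
          have hbT : b ∈ T := Finset.mem_of_mem_erase hb
          have hcT : c ∈ T := Finset.mem_of_mem_erase (Finset.mem_of_mem_erase hc)
          obtain ⟨s1, hs1, ha1⟩ := IH (T.erase a) (Finset.erase_ssubset ha)
          obtain ⟨s2, hs2, ha2⟩ := IH (T.erase b) (Finset.erase_ssubset hbT)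
          obtain ⟨s3, hs3, ha3⟩ := IH (T.erase c) (Finset.erase_ssubset hcT)
          refine ⟨fun i => f ![s1 i, s2 i, s3 i], ?_, ?_⟩
          · have hmem := hS ![s1, s2, s3] (by intro l; fin_cases l <;> simpa)
            have he : (fun i => f fun l => (![s1, s2, s3] : Fin 3 → Fin n → ℤ) l i)
                = fun i => f ![s1 i, s2 i, s3 i] := by
              funext i; congr 1; funext l; fin_cases l <;> rfl
            rwa [he] at hmem
          · intro i hi
            apply maj_two_eq hf
            by_cases hia : i = a
            · subst hia
              refine Or.inr (Or.inr ⟨?_, ?_⟩)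
              · exact ha2 i (Finset.mem_erase.mpr ⟨Ne.symm hba, hi⟩)
              · exact ha3 i (Finset.mem_erase.mpr ⟨Ne.symm hca, hi⟩)
            · by_cases hib : i = b
              · subst hib
                refine Or.inr (Or.inl ⟨?_, ?_⟩)
                · exact ha1 i (Finset.mem_erase.mpr ⟨hia, hi⟩)
                · exact ha3 i (Finset.mem_erase.mpr ⟨Ne.symm hcb, hi⟩)
              · refine Or.inl ⟨?_, ?_⟩
                · exact ha1 i (Finset.mem_erase.mpr ⟨hia, hi⟩)
                · exact ha2 i (Finset.mem_erase.mpr ⟨hib, hi⟩)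
    obtain ⟨s, hs, hall⟩ := key Finset.univ
    have hsx : s = x := funext fun i => hall i (Finset.mem_univ i)
    rwa [← hsx]

end Aux

/-- under the assumption that some majority operation `h` preserves all
`g`-closed subsets of `ℤ²`, properties (i)-(iv) are all equivalent. -/
theorem stmt_3 {n k : ℕ} (hn : 2 ≤ n) (hk : 1 ≤ k) (S : Set (Fin n → ℤ))
    (g : (Fin k → ℤ) → ℤ)
    (hmaj : ∃ h : (Fin 3 → ℤ) → ℤ, IsMajorityOp h ∧
      ∀ R : Set (Fin 2 → ℤ), CptClosed g R → CptClosed h R) :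
    ((MajClosed S ∧ CptClosed g S) ↔
      (MajClosed S ∧ ∀ i j : Fin n, i < j → CptClosed g (projSet i j S))) ∧
    ((MajClosed S ∧ ∀ i j : Fin n, i < j → CptClosed g (projSet i j S)) ↔
      (S = joinPairs (fun i j => projSet i j S) ∧
        ∀ i j : Fin n, i < j → CptClosed g (projSet i j S))) ∧
    ((S = joinPairs (fun i j => projSet i j S) ∧
        ∀ i j : Fin n, i < j → CptClosed g (projSet i j S)) ↔
      S = joinPairs (fun i j => clOp g (projSet i j S))) := by
  obtain ⟨h, hmajh, hpres⟩ := hmaj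
  refine ⟨⟨?_, ?_⟩, ⟨?_, ?_⟩, ⟨?_, ?_⟩⟩
  · rintro ⟨hm, hg⟩
    exact ⟨hm, fun i j _ => cpt_proj hg i j⟩
  · rintro ⟨hm, hproj⟩
    refine ⟨hm, ?_⟩
    obtain ⟨f, hfm, hfS⟩ := hm
    have hclosed : CptClosed g (joinPairs fun i j => projSet i j S) := cpt_join hproj
    rwa [← bp hn hfm hfS] at hclosed
  · rintro ⟨hm, hproj⟩
    obtain ⟨f, hfm, hfS⟩ := hm
    exact ⟨bp hn hfm hfS, hproj⟩
  · rintro ⟨hjoin, hproj⟩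
    refine ⟨⟨h, hmajh, ?_⟩, hproj⟩
    have hclosed : CptClosed h (joinPairs fun i j => projSet i j S) :=
      cpt_join fun i j hij => hpres _ (hproj i j hij)
    rwa [← hjoin] at hclosed
  · rintro ⟨hjoin, hproj⟩
    calc S = joinPairs (fun i j => projSet i j S) := hjoin
      _ = joinPairs (fun i j => clOp g (projSet i j S)) :=
        joinPairs_congr fun i j hij => (clOp_eq_of_closed (hproj i j hij)).symm
  · intro hD
    have hSg : CptClosed g S := by
      have hclosed : CptClosed g (joinPairs fun i j => clOp g (projSet i j S)) :=
        cpt_join fun i j _ => clOp_closed g _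
      rwa [← hD] at hclosed
    have hproj : ∀ i j : Fin n, i < j → CptClosed g (projSet i j S) :=
      fun i j _ => cpt_proj hSg i j
    refine ⟨?_, hproj⟩
    calc S = joinPairs (fun i j => clOp g (projSet i j S)) := hD
      _ = joinPairs (fun i j => projSet i j S) :=
        joinPairs_congr fun i j hij => clOp_eq_of_closed (hproj i j hij)
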